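/- Let $x, y : [0, \infty) \to \mathbb{R}$ be continuous on $[0,\infty)$, continuously differentiable on $(0,\infty)$, both solving the scalar Caputo F-ODE $^{C}_{0}D^{\alpha}_{t} u(t) = f(u(t))$ for $0 < \alpha < 1$, where $f$ satisfies the one-sided Lipschitz condition $(f(u)-f(v))(u-v) \le \lambda (u-v)^2$ for all $u, v$ with $\lambda < 0$. If $x(0) > y(0)$, then $x(t) \ge y(t)$ for all $t > 0$. -/

import Mathlib

open Set

/-- The Caputo fractional derivative of order `α` of `u` at time `t`. -/
noncomputable def caputoDeriv (α : ℝ) (u : ℝ → ℝ) (t : ℝ) : ℝ :=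
  (1 / Real.Gamma (1 - α)) * ∫ τ in (0 : ℝ)..t, (t - τ) ^ (-α) * deriv u τ

open MeasureTheory Filter Topology

/-- The kernel is interval integrable. -/
lemma kernel_intble {α : ℝ} (hα1 : α < 1) (t a : ℝ) :
    IntervalIntegrable (fun τ : ℝ => (t - τ) ^ (-α)) volume a t := by
  simpa using (intervalIntegral.intervalIntegrable_rpow'
    (by linarith : (-1 : ℝ) < -α) (a := t - a) (b := t - t)).comp_sub_left t

/-- Integrability of the Caputo integrand away from 0. -/
lemma upper_intble {α : ℝ} (hα1 : α < 1) {w : ℝ → ℝ} (hwc : ContinuousOn w (Ioi 0))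
    {a t : ℝ} (ha : 0 < a) (hat : a ≤ t) :
    IntervalIntegrable (fun τ : ℝ => (t - τ) ^ (-α) * w τ) volume a t := by
  apply (kernel_intble hα1 t a).mul_continuousOn
  apply hwc.mono
  rw [uIcc_of_le hat]
  exact fun τ hτ => lt_of_lt_of_le ha hτ.1

/-- Comparison of integrability near 0. -/
lemma compare_intble {α : ℝ} (hα0 : 0 < α) {w : ℝ → ℝ} (hw : Measurable w)
    {b t : ℝ} (hb : 0 < b) (hbt : b < t) :
    IntegrableOn (fun τ : ℝ => (t - τ) ^ (-α) * w τ) (Ioc 0 b) volume ↔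
      IntegrableOn w (Ioc 0 b) volume := by
  have ht : 0 < t := hb.trans hbt
  have hkm : Measurable fun τ : ℝ => (t - τ) ^ (-α) := by
    have : Measurable fun τ : ℝ => t - τ := measurable_const.sub measurable_id
    fun_prop
  constructor
  · intro h
    refine Integrable.mono' ((h.norm).const_mul (t ^ α)) hw.aestronglyMeasurable ?_
    refine (ae_restrict_iff' measurableSet_Ioc).mpr (Filter.Eventually.of_forall ?_)
    intro τ hτ
    have htτ : 0 < t - τ := by linarith [hτ.2]
    have h1 : t ^ (-α) ≤ (t - τ) ^ (-α) :=
      Real.rpow_le_rpow_of_nonpos htτ (by linarith [hτ.1]) (by linarith)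
    have h2 : (1 : ℝ) ≤ t ^ α * (t - τ) ^ (-α) := by
      have : t ^ α * t ^ (-α) ≤ t ^ α * (t - τ) ^ (-α) :=
        mul_le_mul_of_nonneg_left h1 (Real.rpow_nonneg ht.le α)
      calc (1 : ℝ) = t ^ α * t ^ (-α) := by
            rw [← Real.rpow_add ht]; simp
        _ ≤ _ := this
    have hk0 : 0 ≤ (t - τ) ^ (-α) := Real.rpow_nonneg htτ.le _
    calc ‖w τ‖ = 1 * ‖w τ‖ := by ring
      _ ≤ (t ^ α * (t - τ) ^ (-α)) * ‖w τ‖ := by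
          exact mul_le_mul_of_nonneg_right h2 (norm_nonneg _)
      _ = t ^ α * ‖(t - τ) ^ (-α) * w τ‖ := by
          rw [norm_mul, Real.norm_of_nonneg hk0]; ring
  · intro h
    refine Integrable.mono' ((h.norm).const_mul ((t - b) ^ (-α)))
      ((hkm.mul hw).aestronglyMeasurable) ?_
    refine (ae_restrict_iff' measurableSet_Ioc).mpr (Filter.Eventually.of_forall ?_)
    intro τ hτ
    have htτ : 0 < t - τ := by linarith [hτ.2]
    have h1 : (t - τ) ^ (-α) ≤ (t - b) ^ (-α) :=
      Real.rpow_le_rpow_of_nonpos (by linarith) (by linarith [hτ.2]) (by linarith)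
    have hk0 : 0 ≤ (t - τ) ^ (-α) := Real.rpow_nonneg htτ.le _
    calc ‖(t - τ) ^ (-α) * w τ‖ = (t - τ) ^ (-α) * ‖w τ‖ := by
          rw [norm_mul, Real.norm_of_nonneg hk0]
      _ ≤ (t - b) ^ (-α) * ‖w τ‖ := mul_le_mul_of_nonneg_right h1 (norm_nonneg _)

/-- Any solution of the Caputo F-ODE with a strictly one-sided-Lipschitz right side
has an integrable Caputo integrand. -/
lemma solution_intble (α : ℝ) (hα0 : 0 < α) (hα1 : α < 1)
    (f : ℝ → ℝ) (lam : ℝ) (hlam : lam < 0)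
    (hf : ∀ u v : ℝ, (f u - f v) * (u - v) ≤ lam * (u - v) ^ 2)
    (u : ℝ → ℝ)
    (huderiv : ContinuousOn (deriv u) (Ioi 0))
    (huode : ∀ t : ℝ, 0 < t → caputoDeriv α u t = f (u t)) :
    ∀ t : ℝ, 0 < t →
      IntervalIntegrable (fun τ => (t - τ) ^ (-α) * deriv u τ) volume 0 t := by
  intro t ht
  by_contra hni
  have hmw : Measurable (deriv u) := measurable_deriv u
  -- deriv u is not integrable near 0
  have hnd : ¬ IntegrableOn (deriv u) (Ioc 0 (t / 2)) volume := by
    intro h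
    apply hni
    rw [intervalIntegrable_iff_integrableOn_Ioc_of_le ht.le]
    have h1 : IntegrableOn (fun τ => (t - τ) ^ (-α) * deriv u τ) (Ioc 0 (t / 2)) volume :=
      (compare_intble hα0 hmw (by linarith) (by linarith)).mpr h
    have h2 : IntegrableOn (fun τ => (t - τ) ^ (-α) * deriv u τ) (Ioc (t / 2) t) volume := by
      rw [← intervalIntegrable_iff_integrableOn_Ioc_of_le (by linarith)]
      exact upper_intble hα1 huderiv (by linarith) (by linarith)
    have := h1.union h2
    rwa [Ioc_union_Ioc_eq_Ioc (by linarith) (by linarith)] at this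
  -- hence no solution integrand is integrable at any time
  have hall : ∀ s : ℝ, 0 < s →
      ¬ IntervalIntegrable (fun τ => (s - τ) ^ (-α) * deriv u τ) volume 0 s := by
    intro s hs hIs
    apply hnd
    set b := min (s / 2) (t / 2) with hbdef
    have hb0 : 0 < b := lt_min (by linarith) (by linarith)
    have hbs : b < s := lt_of_le_of_lt (min_le_left _ _) (by linarith)
    have hbt : b ≤ t / 2 := min_le_right _ _
    have h1 : IntegrableOn (fun τ => (s - τ) ^ (-α) * deriv u τ) (Ioc 0 b) volume :=
      ((intervalIntegrable_iff_integrableOn_Ioc_of_le hs.le).mp hIs).mono_set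
        (Ioc_subset_Ioc_right hbs.le)
    have h2 : IntegrableOn (deriv u) (Ioc 0 b) volume :=
      (compare_intble hα0 hmw hb0 hbs).mp h1
    have h3 : IntegrableOn (deriv u) (Ioc b (t / 2)) volume := by
      apply ((huderiv.mono ?_).integrableOn_Icc).mono_set Ioc_subset_Icc_self
      exact fun τ hτ => lt_of_lt_of_le hb0 hτ.1
    have := h2.union h3
    rwa [Ioc_union_Ioc_eq_Ioc hb0.le hbt] at this
  -- so f ∘ u vanishes on (0, ∞)
  have hf0 : ∀ s : ℝ, 0 < s → f (u s) = 0 := by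
    intro s hs
    rw [← huode s hs]
    unfold caputoDeriv
    rw [intervalIntegral.integral_undef (hall s hs), mul_zero]
  -- hence u is constant on (0, ∞)
  have hconst : ∀ s ∈ Ioi (0 : ℝ), ∀ r ∈ Ioi (0 : ℝ), u s = u r := by
    intro s hs r hr
    have h := hf (u s) (u r)
    rw [hf0 s hs, hf0 r hr] at h
    simp only [sub_self, zero_mul] at h
    by_contra hne
    have hsq : 0 < (u s - u r) ^ 2 :=
      lt_of_le_of_ne (sq_nonneg _) (Ne.symm (pow_ne_zero 2 (sub_ne_zero.mpr hne)))
    nlinarith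
  -- hence deriv u = 0 on (0, ∞)
  have hderiv0 : ∀ s ∈ Ioi (0 : ℝ), deriv u s = 0 := by
    intro s hs
    have heq : u =ᶠ[nhds s] fun _ => u s := by
      filter_upwards [isOpen_Ioi.mem_nhds hs] with r hr
      exact hconst r hr s hs
    rw [heq.deriv_eq]
    exact deriv_const s _
  -- contradiction with non-integrability
  apply hnd
  rw [integrableOn_congr_fun (g := fun _ => (0 : ℝ))
    (fun τ hτ => hderiv0 τ hτ.1) measurableSet_Ioc]
  exact integrableOn_zero

/-- Key estimate: if `z ≥ 0` on `[0, t0)`, `z 0 > 0` and `z t0 = 0`, then the Caputo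
integrand of `z` has strictly negative integral over `[0, t0]`. -/
lemma key_neg (α t0 : ℝ) (hα0 : 0 < α) (hα1 : α < 1) (ht0 : 0 < t0)
    (z w : ℝ → ℝ)
    (hzc : ContinuousOn z (Icc 0 t0))
    (hzw : ∀ τ ∈ Ioi (0 : ℝ), HasDerivAt z (w τ) τ)
    (hwc : ContinuousOn w (Ioi 0))
    (hznn : ∀ τ ∈ Ico (0 : ℝ) t0, 0 ≤ z τ)
    (hz0 : 0 < z 0) (hzt0 : z t0 = 0)
    (hint : IntervalIntegrable (fun τ => (t0 - τ) ^ (-α) * w τ) volume 0 t0) :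
    (∫ τ in (0 : ℝ)..t0, (t0 - τ) ^ (-α) * w τ) < 0 := by
  set g : ℝ → ℝ := fun τ => (t0 - τ) ^ (-α) * w τ with hgdef
  -- Step A : basic estimate on compact subintervals
  have stepA : ∀ ε s : ℝ, 0 < ε → ε ≤ s → s < t0 →
      (∫ τ in ε..s, g τ) ≤ (t0 - s) ^ (-α) * z s - (t0 - ε) ^ (-α) * z ε := by
    intro ε s hε hεs hst0
    set Φ : ℝ → ℝ := fun τ => (t0 - τ) ^ (-α) * z τ with hΦdef
    set Φ' : ℝ → ℝ := fun τ =>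
      -1 * -α * (t0 - τ) ^ (-α - 1) * z τ + (t0 - τ) ^ (-α) * w τ with hΦ'def
    have hIcc : Icc ε s ⊆ Ioo 0 t0 := fun τ hτ =>
      ⟨lt_of_lt_of_le hε hτ.1, lt_of_le_of_lt hτ.2 hst0⟩
    have hderiv : ∀ τ ∈ Icc ε s, HasDerivAt Φ (Φ' τ) τ := by
      intro τ hτ
      obtain ⟨h1, h2⟩ := hIcc hτ
      have hne : (0 : ℝ) < t0 - τ := by linarith
      have hk : HasDerivAt (fun τ : ℝ => (t0 - τ) ^ (-α))
          (-1 * -α * (t0 - τ) ^ (-α - 1)) τ :=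
        HasDerivAt.rpow_const ((hasDerivAt_id τ).const_sub t0) (Or.inl hne.ne')
      exact hk.mul (hzw τ h1)
    have hcontz : ContinuousOn z (Icc ε s) :=
      hzc.mono fun τ hτ => ⟨(hIcc hτ).1.le, (hIcc hτ).2.le⟩
    have hcontw : ContinuousOn w (Icc ε s) := hwc.mono fun τ hτ => (hIcc hτ).1
    have hkcont : ∀ p : ℝ, ContinuousOn (fun τ : ℝ => (t0 - τ) ^ p) (Icc ε s) := by
      intro p
      apply ContinuousOn.rpow_const (continuousOn_const.sub continuousOn_id)
      exact fun τ hτ => Or.inl (by have := (hIcc hτ).2; intro h; simp at h; linarith)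
    have hΦ'cont : ContinuousOn Φ' (Icc ε s) :=
      (((continuousOn_const.mul (hkcont (-α - 1))).mul hcontz)).add
        ((hkcont (-α)).mul hcontw)
    have hgcont : ContinuousOn g (Icc ε s) := (hkcont (-α)).mul hcontw
    have hΦ'int : IntervalIntegrable Φ' volume ε s := by
      apply ContinuousOn.intervalIntegrable; rwa [uIcc_of_le hεs]
    have hgint : IntervalIntegrable g volume ε s := by
      apply ContinuousOn.intervalIntegrable; rwa [uIcc_of_le hεs]
    have hmono : ∀ τ ∈ Icc ε s, g τ ≤ Φ' τ := by
      intro τ hτ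
      have hzτ : 0 ≤ z τ := hznn τ ⟨(hIcc hτ).1.le, (hIcc hτ).2⟩
      have hk0 : 0 ≤ (t0 - τ) ^ (-α - 1) := Real.rpow_nonneg (by
        have := (hIcc hτ).2; linarith) _
      have : 0 ≤ -1 * -α * (t0 - τ) ^ (-α - 1) * z τ :=
        mul_nonneg (mul_nonneg (by linarith) hk0) hzτ
      simp only [hgdef, hΦ'def]; linarith
    calc (∫ τ in ε..s, g τ) ≤ ∫ τ in ε..s, Φ' τ :=
          intervalIntegral.integral_mono_on hεs hgint hΦ'int hmono
      _ = Φ s - Φ ε := by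
          apply intervalIntegral.integral_eq_sub_of_hasDerivAt _ hΦ'int
          rwa [uIcc_of_le hεs]
      _ = (t0 - s) ^ (-α) * z s - (t0 - ε) ^ (-α) * z ε := rfl
  -- Step B/C : pass to the limit s → t0⁻
  have stepAC : ∀ ε : ℝ, 0 < ε → ε < t0 →
      (∫ τ in ε..t0, g τ) ≤ 0 - (t0 - ε) ^ (-α) * z ε := by
    intro ε hε hεt0
    have hmemIcc : Icc ε t0 ∈ 𝓝[<] t0 :=
      Filter.mem_of_superset (Ico_mem_nhdsLT_of_mem ⟨hεt0, le_refl _⟩) Ico_subset_Icc_self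
    have hmemIco : Ico ε t0 ∈ 𝓝[<] t0 := Ico_mem_nhdsLT_of_mem ⟨hεt0, le_refl _⟩
    -- the primitive is continuous up to t0
    have hF : Tendsto (fun s => ∫ τ in ε..s, g τ) (𝓝[<] t0) (𝓝 (∫ τ in ε..t0, g τ)) := by
      have hint' : IntervalIntegrable g volume ε t0 := by
        apply hint.mono_set
        rw [uIcc_of_le hεt0.le, uIcc_of_le ht0.le]
        exact Icc_subset_Icc (by linarith) (le_refl _)
      have hcont := intervalIntegral.continuousOn_primitive_interval' hint' left_mem_uIcc
      have h1 : ContinuousWithinAt (fun s => ∫ τ in ε..s, g τ) (uIcc ε t0) t0 :=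
        hcont t0 right_mem_uIcc
      have h2 := h1.tendsto
      apply h2.mono_left (nhdsWithin_le_of_mem _)
      rwa [uIcc_of_le hεt0.le]
    -- the boundary term tends to 0
    have hΦlim : Tendsto (fun s => (t0 - s) ^ (-α) * z s) (𝓝[<] t0) (𝓝 0) := by
      obtain ⟨M, hM⟩ := (isCompact_Icc (a := ε) (b := t0)).exists_bound_of_continuousOn
        (hwc.mono fun τ hτ => lt_of_lt_of_le hε hτ.1)
      apply squeeze_zero_norm' (a := fun s => M * (t0 - s) ^ (1 - α))
      · filter_upwards [hmemIco] with s hs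
        have hst0 : s < t0 := hs.2
        have hεs : ε ≤ s := hs.1
        have hpos : (0 : ℝ) < t0 - s := by linarith
        have hftc : (∫ τ in s..t0, w τ) = z t0 - z s := by
          apply intervalIntegral.integral_eq_sub_of_hasDerivAt
          · intro τ hτ
            rw [uIcc_of_le hst0.le] at hτ
            exact hzw τ (lt_of_lt_of_le (lt_of_lt_of_le hε hεs) hτ.1)
          · apply ContinuousOn.intervalIntegrable
            apply hwc.mono
            rw [uIcc_of_le hst0.le]
            exact fun τ hτ => lt_of_lt_of_le (lt_of_lt_of_le hε hεs) hτ.1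
        have hzbound : ‖z s‖ ≤ M * (t0 - s) := by
          have hzs : z s = -(∫ τ in s..t0, w τ) := by rw [hftc, hzt0]; ring
          rw [hzs, norm_neg]
          have := intervalIntegral.norm_integral_le_of_norm_le_const (C := M)
            (f := w) (a := s) (b := t0) ?_
          · calc ‖∫ τ in s..t0, w τ‖ ≤ M * |t0 - s| := this
              _ = M * (t0 - s) := by rw [abs_of_pos hpos]
          · intro τ hτ
            rw [uIoc_of_le hst0.le] at hτ
            exact hM τ ⟨le_trans hεs hτ.1.le, hτ.2⟩
        have hk0 : 0 ≤ (t0 - s) ^ (-α) := Real.rpow_nonneg hpos.le _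
        calc ‖(t0 - s) ^ (-α) * z s‖ = (t0 - s) ^ (-α) * ‖z s‖ := by
              rw [norm_mul, Real.norm_of_nonneg hk0]
          _ ≤ (t0 - s) ^ (-α) * (M * (t0 - s)) := mul_le_mul_of_nonneg_left hzbound hk0
          _ = M * (t0 - s) ^ (1 - α) := by
              rw [show (1 : ℝ) - α = -α + 1 by ring, Real.rpow_add hpos, Real.rpow_one]
              ring
      · have h1 : Tendsto (fun s : ℝ => t0 - s) (𝓝[<] t0) (𝓝 0) := by
          have hc : Tendsto (fun s : ℝ => t0 - s) (𝓝 t0) (𝓝 (t0 - t0)) :=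
            ((continuous_const (y := t0)).sub continuous_id).tendsto t0
          rw [sub_self] at hc
          exact hc.mono_left nhdsWithin_le_nhds
        have h2 : ContinuousAt (fun u : ℝ => u ^ (1 - α)) 0 :=
          Real.continuousAt_rpow_const 0 (1 - α) (Or.inr (by linarith))
        have h3 := (h2.tendsto.comp h1).const_mul M
        simp only [Function.comp] at h3
        rw [Real.zero_rpow (by intro h; linarith [h] : (1 : ℝ) - α ≠ 0), mul_zero] at h3
        exact h3
    have hev : ∀ᶠ s in 𝓝[<] t0,
        (∫ τ in ε..s, g τ) ≤ (t0 - s) ^ (-α) * z s - (t0 - ε) ^ (-α) * z ε := by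
      filter_upwards [hmemIco] with s hs
      exact stepA ε s hε hs.1 hs.2
    exact le_of_tendsto_of_tendsto hF (hΦlim.sub tendsto_const_nhds) hev
  -- Step D : pass to the limit ε → 0⁺
  have hIcc_int : IntegrableOn g (Icc 0 t0) volume :=
    ((intervalIntegrable_iff_integrableOn_Ioc_of_le ht0.le).mp hint).congr_set_ae
      Ioc_ae_eq_Icc.symm
  have hG : Tendsto (fun ε => ∫ τ in ε..t0, g τ) (𝓝[>] 0) (𝓝 (∫ τ in (0:ℝ)..t0, g τ)) := by
    have hcont := intervalIntegral.continuousOn_primitive_interval_left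
      (a := 0) (b := t0) (f := g) (by rwa [uIcc_of_le ht0.le])
    have h1 : ContinuousWithinAt (fun ε => ∫ τ in ε..t0, g τ) (uIcc 0 t0) 0 :=
      hcont 0 left_mem_uIcc
    apply h1.tendsto.mono_left (nhdsWithin_le_of_mem _)
    rw [uIcc_of_le ht0.le]
    exact Filter.mem_of_superset (Ioo_mem_nhdsGT_of_mem ⟨le_refl _, ht0⟩) Ioo_subset_Icc_self
  have hB : Tendsto (fun ε => 0 - (t0 - ε) ^ (-α) * z ε) (𝓝[>] 0)
      (𝓝 (0 - t0 ^ (-α) * z 0)) := by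
    have hk : Tendsto (fun ε : ℝ => (t0 - ε) ^ (-α)) (𝓝[>] 0) (𝓝 (t0 ^ (-α))) := by
      have h1 : ContinuousAt (fun ε : ℝ => (t0 - ε) ^ (-α)) 0 := by
        have hb : ContinuousAt (fun ε : ℝ => t0 - ε) 0 :=
          (continuous_const.sub continuous_id).continuousAt
        have h2 : ContinuousAt (fun u : ℝ => u ^ (-α)) (t0 - 0) := by
          apply Real.continuousAt_rpow_const
          left; simp; linarith
        have := h2.comp hb
        exact this
      have h3 : Tendsto (fun ε : ℝ => (t0 - ε) ^ (-α)) (𝓝[>] (0:ℝ))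
          (𝓝 ((t0 - 0) ^ (-α))) := h1.tendsto.mono_left nhdsWithin_le_nhds
      simpa using h3
    have hzc0 : Tendsto z (𝓝[>] 0) (𝓝 (z 0)) := by
      have h1 : ContinuousWithinAt z (Icc 0 t0) 0 := hzc 0 ⟨le_refl _, ht0.le⟩
      apply h1.tendsto.mono_left (nhdsWithin_le_of_mem _)
      exact Filter.mem_of_superset (Ioo_mem_nhdsGT_of_mem ⟨le_refl _, ht0⟩) Ioo_subset_Icc_self
    exact (tendsto_const_nhds.sub (hk.mul hzc0))
  have hev2 : ∀ᶠ ε in 𝓝[>] 0,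
      (∫ τ in ε..t0, g τ) ≤ 0 - (t0 - ε) ^ (-α) * z ε := by
    filter_upwards [Ioo_mem_nhdsGT_of_mem (show (0:ℝ) ∈ Ico 0 t0 from ⟨le_refl _, ht0⟩)]
      with ε hε
    exact stepAC ε hε.1 hε.2
  have hfinal := le_of_tendsto_of_tendsto hG hB hev2
  have hpos : 0 < t0 ^ (-α) * z 0 := mul_pos (Real.rpow_pos_of_pos ht0 _) hz0
  linarith


theorem caputo_fode_comparison (α : ℝ) (hα0 : 0 < α) (hα1 : α < 1)
    (f : ℝ → ℝ) (lam : ℝ) (hlam : lam < 0)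
    (hf : ∀ u v : ℝ, (f u - f v) * (u - v) ≤ lam * (u - v) ^ 2)
    (x y : ℝ → ℝ)
    (hxcont : ContinuousOn x (Ici 0)) (hycont : ContinuousOn y (Ici 0))
    (hxdiff : ∀ t ∈ Ioi (0 : ℝ), DifferentiableAt ℝ x t)
    (hydiff : ∀ t ∈ Ioi (0 : ℝ), DifferentiableAt ℝ y t)
    (hxderiv_cont : ContinuousOn (deriv x) (Ioi 0))
    (hyderiv_cont : ContinuousOn (deriv y) (Ioi 0))
    (hxode : ∀ t : ℝ, 0 < t → caputoDeriv α x t = f (x t))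
    (hyode : ∀ t : ℝ, 0 < t → caputoDeriv α y t = f (y t))
    (h0 : y 0 < x 0) :
    ∀ t : ℝ, 0 < t → y t ≤ x t := by
  intro t ht
  by_contra hlt
  push_neg at hlt
  set z : ℝ → ℝ := fun s => x s - y s with hzdef
  have hz0 : 0 < z 0 := by simp only [hzdef]; linarith
  have hzt : z t < 0 := by simp only [hzdef]; linarith
  have hzc : ContinuousOn z (Ici 0) := hxcont.sub hycont
  -- the set of zeros of z in [0, t]
  set S : Set ℝ := Icc 0 t ∩ z ⁻¹' {0} with hSdef
  have hSclosed : IsClosed S :=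
    (hzc.mono (Icc_subset_Ici_self)).preimage_isClosed_of_isClosed isClosed_Icc
      isClosed_singleton
  have hSne : S.Nonempty := by
    have h1 : (0 : ℝ) ∈ Icc (z t) (z 0) := ⟨hzt.le, hz0.le⟩
    obtain ⟨c, hc, hc0⟩ := intermediate_value_Icc' ht.le (hzc.mono Icc_subset_Ici_self) h1
    exact ⟨c, hc, hc0⟩
  have hSbdd : BddBelow S := ⟨0, fun s hs => hs.1.1⟩
  set t0 : ℝ := sInf S with ht0def
  have ht0S : t0 ∈ S := hSclosed.csInf_mem hSne hSbdd
  have hzt0 : z t0 = 0 := ht0S.2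
  have ht0nn : 0 ≤ t0 := ht0S.1.1
  have ht0t : t0 ≤ t := ht0S.1.2
  have ht00 : 0 < t0 := by
    rcases ht0nn.lt_or_eq with h | h
    · exact h
    · exfalso; rw [← h] at hzt0; linarith
  -- z is nonnegative before t0
  have hnn : ∀ τ ∈ Ico (0 : ℝ) t0, 0 ≤ z τ := by
    intro τ hτ
    by_contra hneg
    push_neg at hneg
    have h1 : (0 : ℝ) ∈ Icc (z τ) (z 0) := ⟨hneg.le, hz0.le⟩
    obtain ⟨c, hc, hc0⟩ := intermediate_value_Icc' hτ.1
      (hzc.mono fun s hs => le_trans (le_refl _) hs.1) h1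
    have hcS : c ∈ S := ⟨⟨hc.1, le_trans hc.2 (le_trans hτ.2.le ht0t)⟩, hc0⟩
    have := csInf_le hSbdd hcS
    linarith [hc.2, hτ.2]
  -- derivative data for z
  set w : ℝ → ℝ := fun τ => deriv x τ - deriv y τ with hwdef
  have hzw : ∀ τ ∈ Ioi (0 : ℝ), HasDerivAt z (w τ) τ := fun τ hτ =>
    ((hxdiff τ hτ).hasDerivAt.sub (hydiff τ hτ).hasDerivAt)
  have hwc : ContinuousOn w (Ioi 0) := hxderiv_cont.sub hyderiv_cont
  -- integrability of both Caputo integrands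
  have hix := solution_intble α hα0 hα1 f lam hlam hf x hxderiv_cont hxode t0 ht00
  have hiy := solution_intble α hα0 hα1 f lam hlam hf y hyderiv_cont hyode t0 ht00
  have hint : IntervalIntegrable (fun τ => (t0 - τ) ^ (-α) * w τ) volume 0 t0 := by
    have h := hix.sub hiy
    have heq : (fun τ => (t0 - τ) ^ (-α) * w τ) =
        fun τ => (t0 - τ) ^ (-α) * deriv x τ - (t0 - τ) ^ (-α) * deriv y τ := by
      funext τ; simp only [hwdef]; ring
    rwa [heq]
  -- key estimate
  have hneg := key_neg α t0 hα0 hα1 ht00 z w (hzc.mono Icc_subset_Ici_self)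
    hzw hwc hnn hz0 hzt0 hint
  -- but the integral equals Γ(1-α) * (f (x t0) - f (y t0)) = 0
  have hxy0 : x t0 = y t0 := by
    have := hzt0; simp only [hzdef] at this; linarith
  have hI : (∫ τ in (0:ℝ)..t0, (t0 - τ) ^ (-α) * w τ) =
      (∫ τ in (0:ℝ)..t0, (t0 - τ) ^ (-α) * deriv x τ) -
      (∫ τ in (0:ℝ)..t0, (t0 - τ) ^ (-α) * deriv y τ) := by
    rw [← intervalIntegral.integral_sub hix hiy]
    congr 1
    funext τ
    simp only [hwdef]; ring
  have hΓ : 0 < Real.Gamma (1 - α) := Real.Gamma_pos_of_pos (by linarith)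
  have hcx := hxode t0 ht00
  have hcy := hyode t0 ht00
  unfold caputoDeriv at hcx hcy
  have hne : (1 : ℝ) / Real.Gamma (1 - α) ≠ 0 := by positivity
  have hIeq : (∫ τ in (0:ℝ)..t0, (t0 - τ) ^ (-α) * deriv x τ) =
      ∫ τ in (0:ℝ)..t0, (t0 - τ) ^ (-α) * deriv y τ := by
    apply mul_left_cancel₀ hne
    rw [hcx, hcy, hxy0]
  rw [hI, hIeq, sub_self] at hneg
  exact lt_irrefl 0 hneg
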